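/- Let 0 < ε < min(1/e, √3/2) and let f_ε(r) = arctan(r/ε²) + (arctan ε)·r/ε for r ∈ [0, ε]. Then ∫_{r=0}^{ε} r·|d/dr(cos f_ε(r))| dr ≤ 12·ε²·|ln ε|. -/

import Mathlib

open MeasureTheory Filter Topology Real

/-- The zenith-angle function `f_ε(r) = arctan(r/ε²) + (arctan ε)·r/ε`. -/
noncomputable def fe (ε r : ℝ) : ℝ := Real.arctan (r / ε ^ 2) + Real.arctan ε * r / ε

/-- Its derivative `f_ε'(r) = ε²/(ε⁴ + r²) + (arctan ε)/ε`. -/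
noncomputable def fder (ε r : ℝ) : ℝ := ε ^ 2 / (ε ^ 4 + r ^ 2) + Real.arctan ε / ε

/-- for `0 < ε < min(1/e, √3/2)`,
`∫_{r=0}^{ε} r·|d/dr(cos f_ε(r))| dr ≤ 12·ε²·|ln ε|`,
where `d/dr(cos f_ε(r)) = −sin(f_ε(r))·f_ε'(r)`. -/
theorem integral_deriv_cos_fe_bound (ε : ℝ) (hε0 : 0 < ε)
    (hε : ε < min (1 / Real.exp 1) (Real.sqrt 3 / 2)) :
    ∫ r in Set.Ioo (0 : ℝ) ε, r * |(-(Real.sin (fe ε r) * fder ε r))|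
      ≤ 12 * ε ^ 2 * |Real.log ε| := by
  have hε1 : ε < 1 / Real.exp 1 := lt_of_lt_of_le hε (min_le_left _ _)
  have hL : Real.log ε < -1 := by
    have h := Real.log_lt_log hε0 hε1
    rwa [one_div, Real.log_inv, Real.log_exp] at h
  have hεlt1 : ε < 1 := by
    have : (1:ℝ) / Real.exp 1 < 1 := by
      rw [div_lt_one (Real.exp_pos 1)]
      have := Real.add_one_le_exp 1
      linarith
    linarith
  have habs : |Real.log ε| = -Real.log ε := abs_of_neg (by linarith)
  have hden : ∀ r : ℝ, ε ^ 4 + r ^ 2 ≠ 0 := fun r => by positivity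
  have hcontd : Continuous (fun r : ℝ => ε ^ 4 + r ^ 2) := by continuity
  have hcont_fder : Continuous (fder ε) := by
    unfold fder
    exact (continuous_const.div hcontd hden).add continuous_const
  have hcont_fe : Continuous (fe ε) := by unfold fe; continuity
  have harcpos : 0 < Real.arctan ε := by
    have := Real.arctan_strictMono hε0
    rwa [Real.arctan_zero] at this
  have hfder_pos : ∀ r : ℝ, 0 < fder ε r := fun r =>
    add_pos (by positivity) (div_pos (harcpos) hε0)
  have hcontg : Continuous (fun r : ℝ => r * fder ε r) := continuous_id.mul hcont_fder
  have hcontf : Continuous (fun r : ℝ => r * |(-(Real.sin (fe ε r) * fder ε r))|) := by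
    apply continuous_id.mul
    exact (((Real.continuous_sin.comp hcont_fe).mul hcont_fder).neg).abs
  -- step 1: bound by r * fder
  have step1 : ∫ r in Set.Ioo (0 : ℝ) ε, r * |(-(Real.sin (fe ε r) * fder ε r))|
      ≤ ∫ r in Set.Ioo (0 : ℝ) ε, r * fder ε r := by
    apply MeasureTheory.setIntegral_mono_on
    · exact (hcontf.integrableOn_Icc (a := 0) (b := ε)).mono_set Set.Ioo_subset_Icc_self
    · exact (hcontg.integrableOn_Icc (a := 0) (b := ε)).mono_set Set.Ioo_subset_Icc_self
    · exact measurableSet_Ioo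
    · intro r hr
      have hr0 : 0 ≤ r := le_of_lt hr.1
      have : |(-(Real.sin (fe ε r) * fder ε r))| ≤ fder ε r := by
        rw [abs_neg, abs_mul, abs_of_pos (hfder_pos r)]
        calc |Real.sin (fe ε r)| * fder ε r ≤ 1 * fder ε r :=
              mul_le_mul_of_nonneg_right (Real.abs_sin_le_one _) (hfder_pos r).le
          _ = fder ε r := one_mul _
      exact mul_le_mul_of_nonneg_left this hr0
  -- step 2: compute the integral of r * fder via FTC
  set F : ℝ → ℝ := fun r => ε ^ 2 / 2 * Real.log (ε ^ 4 + r ^ 2) + Real.arctan ε / ε * (r ^ 2 / 2)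
    with hF
  have hFderiv : ∀ r : ℝ, HasDerivAt F (r * fder ε r) r := by
    intro r
    have h1 : HasDerivAt (fun r : ℝ => ε ^ 4 + r ^ 2) (2 * r) r := by
      simpa using (hasDerivAt_pow 2 r).const_add (ε ^ 4)
    have h2 : HasDerivAt (fun r : ℝ => Real.log (ε ^ 4 + r ^ 2)) (2 * r / (ε ^ 4 + r ^ 2)) r :=
      h1.log (hden r)
    have h3 := h2.const_mul (ε ^ 2 / 2)
    have h4 : HasDerivAt (fun r : ℝ => r ^ 2 / 2) r r := by
      simpa using (hasDerivAt_pow 2 r).div_const 2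
    have h5 := h4.const_mul (Real.arctan ε / ε)
    have h6 := h3.add h5
    refine h6.congr_deriv ?_
    unfold fder
    field_simp
  have step2 : ∫ r in Set.Ioo (0 : ℝ) ε, r * fder ε r = F ε - F 0 := by
    rw [← MeasureTheory.integral_Ioc_eq_integral_Ioo, ← intervalIntegral.integral_of_le hε0.le]
    exact intervalIntegral.integral_eq_sub_of_hasDerivAt (fun r _ => hFderiv r)
      (hcontg.intervalIntegrable 0 ε)
  -- step 3: estimate F ε - F 0
  have hlogsum : Real.log (ε ^ 4 + ε ^ 2) = 2 * Real.log ε + Real.log (1 + ε ^ 2) := by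
    have h : ε ^ 4 + ε ^ 2 = ε ^ 2 * (1 + ε ^ 2) := by ring
    rw [h, Real.log_mul (by positivity) (by positivity), Real.log_pow]
    push_cast; ring
  have hlog0 : Real.log (ε ^ 4 + 0 ^ 2) = 4 * Real.log ε := by
    norm_num [Real.log_pow]
  have hlog1 : Real.log (1 + ε ^ 2) ≤ ε ^ 2 := by
    have := Real.log_le_sub_one_of_pos (x := 1 + ε ^ 2) (by positivity)
    linarith
  have hπ : (1:ℝ) < Real.pi / 2 := by linarith [Real.pi_gt_three]
  have harctan : Real.arctan ε / ε ≤ 1 := by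
    rw [div_le_one hε0]
    have ht : ε < Real.tan ε := Real.lt_tan hε0 (by linarith)
    calc Real.arctan ε ≤ Real.arctan (Real.tan ε) := Real.arctan_strictMono.monotone ht.le
      _ = ε := Real.arctan_tan (by linarith) (by linarith)
  have harctan0 : 0 ≤ Real.arctan ε / ε := le_of_lt (div_pos (harcpos) hε0)
  have hε2 : 0 < ε ^ 2 := by positivity
  have hε2le : ε ^ 2 ≤ 1 := by nlinarith
  calc ∫ r in Set.Ioo (0 : ℝ) ε, r * |(-(Real.sin (fe ε r) * fder ε r))|
      ≤ F ε - F 0 := by rw [← step2]; exact step1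
    _ ≤ 12 * ε ^ 2 * |Real.log ε| := by
        rw [hF, habs]
        simp only []
        rw [hlogsum] at *
        rw [hlog0]
        nlinarith [ mul_le_mul_of_nonneg_left hlog1 hε2.le,
          mul_le_mul_of_nonneg_left harctan hε2.le,
          mul_nonneg hε2.le (by linarith : (0:ℝ) ≤ -Real.log ε - 1),
          mul_le_mul_of_nonneg_left hε2le hε2.le]
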